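/- arXiv:2605.28513 — 2 statements merged into one kernel-verified Lean document; each statement's English description precedes it below -/
import Mathlib

section
/- Coercivity of smooth convex functions: let H be a real inner product space and let g : H → ℝ be differentiable, convex, and α-smooth for some α > 0. Then for all w, w' ∈ H, ⟨w − w', ∇g(w) − ∇g(w')⟩ ≥ (1/α)‖∇g(w) − ∇g(w')‖². -/
open RealInnerProductSpace

private lemma descent_lemma
    {H : Type*} [NormedAddCommGroup H] [InnerProductSpace ℝ H] [CompleteSpace H]
    (g : H → ℝ) (α : ℝ) (hα : 0 < α)
    (hdiff : Differentiable ℝ g)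
    (hsmooth : ∀ w w' : H, ‖gradient g w - gradient g w'‖ ≤ α * ‖w - w'‖)
    (x v : H) :
    g (x + v) ≤ g x + ⟪v, gradient g x⟫ + α / 2 * ‖v‖ ^ 2 := by
  set φ : ℝ → ℝ := fun t =>
    g (x + t • v) - t * ⟪v, gradient g x⟫ - α * t ^ 2 / 2 * ‖v‖ ^ 2 with hφ
  have hder : ∀ t : ℝ, HasDerivAt φ
      (⟪v, gradient g (x + t • v)⟫ - ⟪v, gradient g x⟫ - α * t * ‖v‖ ^ 2) t := by
    intro t
    have hl : HasDerivAt (fun t : ℝ => x + t • v) v t := by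
      simpa using (hasDerivAt_id t).smul_const v |>.const_add x
    have hg : HasFDerivAt g (InnerProductSpace.toDual ℝ H (gradient g (x + t • v)))
        (x + t • v) := (hdiff (x + t • v)).hasGradientAt.hasFDerivAt
    have h1 : HasDerivAt (fun t : ℝ => g (x + t • v))
        ⟪gradient g (x + t • v), v⟫ t := by
        have := hg.comp_hasDerivAt t hl
        exact this
    have h2 : HasDerivAt (fun t : ℝ => t * ⟪v, gradient g x⟫)
        ⟪v, gradient g x⟫ t := by simpa using (hasDerivAt_id t).mul_const _
    have h3 : HasDerivAt (fun t : ℝ => α * t ^ 2 / 2 * ‖v‖ ^ 2)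
        (α * t * ‖v‖ ^ 2) t := by
      have : HasDerivAt (fun t : ℝ => t ^ 2) (2 * t) t := by
        simpa using hasDerivAt_pow 2 t
      have := ((this.const_mul α).div_const 2).mul_const (‖v‖ ^ 2)
      rw [show α * t * ‖v‖ ^ 2 = α * (2 * t) / 2 * ‖v‖ ^ 2 by ring]; exact this
    have := (h1.sub h2).sub h3
    rw [real_inner_comm v (gradient g (x + t • v))] at this
    exact this
  have hmono : AntitoneOn φ (Set.Icc (0 : ℝ) 1) := by
    apply antitoneOn_of_deriv_nonpos (convex_Icc 0 1)
    · exact fun t _ => (hder t).continuousAt.continuousWithinAt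
    · exact fun t _ => (hder t).differentiableAt.differentiableWithinAt
    · intro t ht
      rw [interior_Icc] at ht
      rw [(hder t).deriv]
      have h1 : ⟪v, gradient g (x + t • v) - gradient g x⟫ ≤ α * t * ‖v‖ ^ 2 := by
        calc ⟪v, gradient g (x + t • v) - gradient g x⟫
            ≤ ‖v‖ * ‖gradient g (x + t • v) - gradient g x‖ :=
              real_inner_le_norm _ _
          _ ≤ ‖v‖ * (α * ‖(x + t • v) - x‖) := by
              exact mul_le_mul_of_nonneg_left (hsmooth _ _) (norm_nonneg _)
          _ = α * |t| * ‖v‖ ^ 2 := by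
              simp [norm_smul]; ring
          _ = α * t * ‖v‖ ^ 2 := by rw [abs_of_pos ht.1]
      have := inner_sub_right (𝕜 := ℝ) v (gradient g (x + t • v)) (gradient g x)
      linarith [h1, this.symm.le, this.le]
  have := hmono (Set.mem_Icc.2 ⟨le_refl 0, zero_le_one⟩)
    (Set.mem_Icc.2 ⟨zero_le_one, le_refl 1⟩) zero_le_one
  simp only [hφ, one_smul, zero_smul, add_zero, one_pow, mul_one] at this
  nlinarith [this]

/-- **Coercivity of smooth convex functions** (Lemma 3.2): a differentiable, convex,
`α`-smooth function `g` on a real inner product space satisfies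
`⟪w − w', ∇g(w) − ∇g(w')⟫ ≥ (1/α) ‖∇g(w) − ∇g(w')‖²` for all `w, w'`. -/
theorem coercivity_of_smooth_convex
    {H : Type*} [NormedAddCommGroup H] [InnerProductSpace ℝ H] [CompleteSpace H]
    (g : H → ℝ) (α : ℝ) (hα : 0 < α)
    (hdiff : Differentiable ℝ g)
    (hconv : ∀ w w' : H, g w' + ⟪w - w', gradient g w'⟫ ≤ g w)
    (hsmooth : ∀ w w' : H, ‖gradient g w - gradient g w'‖ ≤ α * ‖w - w'‖) :
    ∀ w w' : H,
      (1 / α) * ‖gradient g w - gradient g w'‖ ^ 2 ≤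
        ⟪w - w', gradient g w - gradient g w'⟫ := by
  have key : ∀ w w' : H,
      g w' + ⟪w - w', gradient g w'⟫ + (1 / (2 * α)) * ‖gradient g w - gradient g w'‖ ^ 2
        ≤ g w := by
    intro w w'
    set u := gradient g w - gradient g w' with hu
    have hd := descent_lemma g α hα hdiff hsmooth w (-((1 / α) • u))
    have hc := hconv (w + -((1 / α) • u)) w'
    have e1 : ⟪-((1 / α) • u), gradient g w⟫ = -(1 / α) * ⟪u, gradient g w⟫ := by
      simp [real_inner_smul_left]
    have e2 : ‖-((1 / α) • u)‖ ^ 2 = (1 / α) ^ 2 * ‖u‖ ^ 2 := by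
      rw [norm_neg, norm_smul]; rw [Real.norm_eq_abs, abs_of_pos (one_div_pos.2 hα)]; ring
    have e3 : ⟪w + -((1 / α) • u) - w', gradient g w'⟫ =
        ⟪w - w', gradient g w'⟫ - (1 / α) * ⟪u, gradient g w'⟫ := by
      have : w + -((1 / α) • u) - w' = (w - w') - (1 / α) • u := by abel
      rw [this, inner_sub_left, real_inner_smul_left]
    have e4 : ⟪u, gradient g w⟫ - ⟪u, gradient g w'⟫ = ‖u‖ ^ 2 := by
      rw [← inner_sub_right, ← hu, real_inner_self_eq_norm_sq]
    rw [e1, e2] at hd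
    rw [e3] at hc
    have e7 : α / 2 * ((1 / α) ^ 2 * ‖u‖ ^ 2) = 1 / (2 * α) * ‖u‖ ^ 2 := by
      field_simp
    have e8 : (1 / α) * ⟪u, gradient g w⟫ - (1 / α) * ⟪u, gradient g w'⟫ =
        (1 / α) * ‖u‖ ^ 2 := by rw [← mul_sub, e4]
    have e9 : 1 / (2 * α) * ‖u‖ ^ 2 = (1 / α) * ‖u‖ ^ 2 - 1 / (2 * α) * ‖u‖ ^ 2 := by
      field_simp; ring
    linarith [hd, hc, e7, e8, e9]
  intro w w'
  have h1 := key w w'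
  have h2 := key w' w
  have hsym : ‖gradient g w' - gradient g w‖ = ‖gradient g w - gradient g w'‖ := by
    rw [← norm_neg]; congr 1; abel
  rw [hsym] at h2
  have e5 : ⟪w' - w, gradient g w⟫ = -⟪w - w', gradient g w⟫ := by
    rw [← inner_neg_left]; congr 1; abel
  rw [e5] at h2
  have e6 : ⟪w - w', gradient g w - gradient g w'⟫ =
      ⟪w - w', gradient g w⟫ - ⟪w - w', gradient g w'⟫ := inner_sub_right _ _ _
  rw [e6]
  have : (1 / (2 * α)) * ‖gradient g w - gradient g w'‖ ^ 2 +
      (1 / (2 * α)) * ‖gradient g w - gradient g w'‖ ^ 2 =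
      (1 / α) * ‖gradient g w - gradient g w'‖ ^ 2 := by
    field_simp; ring
  linarith
end

section
/- Gradient-improved convexity inequality: let H be a real inner product space and let g : H → ℝ be differentiable, convex, and α-smooth for some α > 0. Then for all w, w' ∈ H, g(w) ≥ g(w') + ⟨w − w', ∇g(w')⟩ + (1/(2α))‖∇g(w) − ∇g(w')‖². -/
open RealInnerProductSpace

/-- **Gradient-improved convexity inequality** (Eq. (14)): a differentiable, convex,
`α`-smooth function `g` on a real inner product space satisfies
`g(w) ≥ g(w') + ⟪w − w', ∇g(w')⟫ + (1/(2α)) ‖∇g(w) − ∇g(w')‖²` for all `w, w'`. -/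
theorem gradient_improved_convexity
    {H : Type*} [NormedAddCommGroup H] [InnerProductSpace ℝ H] [CompleteSpace H]
    (g : H → ℝ) (α : ℝ) (hα : 0 < α)
    (hdiff : Differentiable ℝ g)
    (hconv : ∀ w w' : H, g w' + ⟪w - w', gradient g w'⟫ ≤ g w)
    (hsmooth : ∀ w w' : H, ‖gradient g w - gradient g w'‖ ≤ α * ‖w - w'‖) :
    ∀ w w' : H,
      g w' + ⟪w - w', gradient g w'⟫
        + (1 / (2 * α)) * ‖gradient g w - gradient g w'‖ ^ 2 ≤ g w := by
  set G := gradient g with hG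
  -- upper bound step: g y - g x - ⟪y-x, G x⟫ ≤ ⟪y-x, G y - G x⟫
  have key : ∀ x y : H, g y - g x - ⟪y - x, G x⟫ ≤ ⟪y - x, G y - G x⟫ := by
    intro x y
    have h1 := hconv x y
    have h2 : ⟪x - y, G y⟫ = -⟪y - x, G y⟫ := by
      rw [← inner_neg_left, neg_sub]
    have h3 : ⟪y - x, G y - G x⟫ = ⟪y - x, G y⟫ - ⟪y - x, G x⟫ := inner_sub_right _ _ _
    linarith
  -- dyadic descent lemma
  have descend : ∀ n : ℕ, ∀ x y : H,
      g y - g x - ⟪y - x, G x⟫ ≤ (α / 2 + α / 2 ^ (n + 1)) * ‖y - x‖ ^ 2 := by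
    intro n
    induction n with
    | zero =>
      intro x y
      have h1 := key x y
      have h2 : ⟪y - x, G y - G x⟫ ≤ ‖y - x‖ * ‖G y - G x‖ := real_inner_le_norm _ _
      have h3 : ‖G y - G x‖ ≤ α * ‖y - x‖ := hsmooth y x
      have h4 : ‖y - x‖ * ‖G y - G x‖ ≤ ‖y - x‖ * (α * ‖y - x‖) :=
        mul_le_mul_of_nonneg_left h3 (norm_nonneg _)
      have : (α / 2 + α / 2 ^ (0 + 1)) = α := by ring
      nlinarith [norm_nonneg (y - x)]
    | succ n ih =>
      intro x y
      set m : H := (2:ℝ)⁻¹ • (x + y) with hm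
      have hmx : m - x = (2:ℝ)⁻¹ • (y - x) := by rw [hm]; module
      have hym : y - m = (2:ℝ)⁻¹ • (y - x) := by rw [hm]; module
      have hnmx : ‖m - x‖ = ‖y - x‖ / 2 := by
        rw [hmx, norm_smul]; simp; ring
      have hnym : ‖y - m‖ = ‖y - x‖ / 2 := by
        rw [hym, norm_smul]; simp; ring
      have e1 := ih x m
      have e2 := ih m y
      have e3 : ⟪y - m, G m - G x⟫ ≤ ‖y - m‖ * (α * ‖m - x‖) := by
        calc ⟪y - m, G m - G x⟫ ≤ ‖y - m‖ * ‖G m - G x‖ := real_inner_le_norm _ _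
        _ ≤ ‖y - m‖ * (α * ‖m - x‖) :=
            mul_le_mul_of_nonneg_left (hsmooth m x) (norm_nonneg _)
      have split : g y - g x - ⟪y - x, G x⟫
          = (g m - g x - ⟪m - x, G x⟫) + (g y - g m - ⟪y - m, G m⟫)
            + ⟪y - m, G m - G x⟫ := by
        have hsum : ⟪m - x, G x⟫ + ⟪y - m, G x⟫ = ⟪y - x, G x⟫ := by
          rw [← inner_add_left]; congr 1; abel
        have hdiff2 : ⟪y - m, G m - G x⟫ = ⟪y - m, G m⟫ - ⟪y - m, G x⟫ :=
          inner_sub_right _ _ _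
        linarith
      rw [hnmx] at e1
      rw [hnym, hnmx] at e3
      rw [hnym] at e2
      have e3' : ⟪y - m, G m - G x⟫ ≤ α * ‖y - x‖ ^ 2 / 4 := by
        calc ⟪y - m, G m - G x⟫ ≤ ‖y - x‖ / 2 * (α * (‖y - x‖ / 2)) := e3
        _ = α * ‖y - x‖ ^ 2 / 4 := by ring
      have hpow : (0:ℝ) < 2 ^ (n + 1) := by positivity
      have hconst : α / 2 + α / 2 ^ (n + 1 + 1)
          = (2 * (α / 2 + α / 2 ^ (n + 1)) + α) / 4 := by
        rw [pow_succ]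
        field_simp
        ring
      have e1' : g m - g x - ⟪m - x, G x⟫
          ≤ (α / 2 + α / 2 ^ (n + 1)) * ‖y - x‖ ^ 2 / 4 := by
        calc g m - g x - ⟪m - x, G x⟫ ≤ (α / 2 + α / 2 ^ (n + 1)) * (‖y - x‖ / 2) ^ 2 := e1
        _ = (α / 2 + α / 2 ^ (n + 1)) * ‖y - x‖ ^ 2 / 4 := by ring
      have e2' : g y - g m - ⟪y - m, G m⟫
          ≤ (α / 2 + α / 2 ^ (n + 1)) * ‖y - x‖ ^ 2 / 4 := by
        calc g y - g m - ⟪y - m, G m⟫ ≤ (α / 2 + α / 2 ^ (n + 1)) * (‖y - x‖ / 2) ^ 2 := e2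
        _ = (α / 2 + α / 2 ^ (n + 1)) * ‖y - x‖ ^ 2 / 4 := by ring
      rw [split, hconst]
      linarith
  -- pass to the limit: true descent lemma
  have descent : ∀ x y : H, g y - g x - ⟪y - x, G x⟫ ≤ (α / 2) * ‖y - x‖ ^ 2 := by
    intro x y
    have hlim : Filter.Tendsto (fun n : ℕ => (α / 2 + α / 2 ^ (n + 1)) * ‖y - x‖ ^ 2)
        Filter.atTop (nhds ((α / 2 + 0) * ‖y - x‖ ^ 2)) := by
      apply Filter.Tendsto.mul_const
      apply Filter.Tendsto.const_add
      have : Filter.Tendsto (fun n : ℕ => α * (1/2 : ℝ) ^ (n+1)) Filter.atTop (nhds 0) := by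
        have h2 := tendsto_pow_atTop_nhds_zero_of_lt_one (by norm_num : (0:ℝ) ≤ 1/2)
          (by norm_num : (1/2:ℝ) < 1)
        have := (h2.comp (Filter.tendsto_add_atTop_nat 1)).const_mul α
        simpa using this
      convert this using 2 with n
      field_simp
      rw [← mul_pow]; norm_num
    have hfin : (α / 2 + 0) * ‖y - x‖ ^ 2 = (α / 2) * ‖y - x‖ ^ 2 := by ring
    rw [← hfin]
    exact ge_of_tendsto hlim (Filter.Eventually.of_forall fun n => descend n x y)
  -- main argument
  intro w w'
  set v : H := G w - G w' with hv
  set y : H := w - α⁻¹ • v with hy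
  have hyw : y - w = -(α⁻¹ • v) := by rw [hy]; abel
  have h1 : g w' + ⟪y - w', G w'⟫ ≤ g y := hconv y w'
  have h2 : g y - g w - ⟪y - w, G w⟫ ≤ (α / 2) * ‖y - w‖ ^ 2 := descent w y
  have hsplit : ⟪y - w', G w'⟫ = ⟪y - w, G w'⟫ + ⟪w - w', G w'⟫ := by
    rw [← inner_add_left]; congr 1; abel
  have hiw : ⟪y - w, G w⟫ - ⟪y - w, G w'⟫ = ⟪y - w, v⟫ := by
    rw [hv, inner_sub_right]
  have hyv : ⟪y - w, v⟫ = -(α⁻¹ * ‖v‖ ^ 2) := by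
    rw [hyw, inner_neg_left, real_inner_smul_left, real_inner_self_eq_norm_sq]
  have hny : ‖y - w‖ ^ 2 = α⁻¹ ^ 2 * ‖v‖ ^ 2 := by
    rw [hyw, norm_neg, norm_smul, mul_pow]
    simp [abs_of_pos (inv_pos.mpr hα)]
  have hc : (α / 2) * ‖y - w‖ ^ 2 = (1 / (2 * α)) * ‖v‖ ^ 2 := by
    rw [hny]; field_simp
  have hd : α⁻¹ * ‖v‖ ^ 2 - (1 / (2 * α)) * ‖v‖ ^ 2 = (1 / (2 * α)) * ‖v‖ ^ 2 := by
    field_simp; ring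
  linarith
end
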